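/- Let f ∈ T(2,n,*) with P(f) = Conv(M_1(f)) having positive area. Then D(f) = ΔP(f) ∩ M_0(f), where ΔP(f) = P'(f) \ P(f) and P'(f) is the polygon obtained by relaxing each primitive edge inequality a_1 x_1 + a_2 x_2 ≤ a_0 (with gcd(a_1,a_2)=1 and a_i integers) of P(f) to a_1 x_1 + a_2 x_2 ≤ a_0 + 1. -/

import Mathlib

open Finset in
/-- The embedding of the integer cube `{0,…,n-1}^d` into `ℝ^d`. -/
def toR {d n : ℕ} (x : Fin d → Fin n) : Fin d → ℝ := fun i => (x i : ℝ)

open Finset in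
/-- `f` is a `k`-threshold function on `{0,…,n-1}^d`: its `1`-set is the solution
set of a system of `k` linear inequalities. -/
def IsKThreshold (d n k : ℕ) (f : (Fin d → Fin n) → Bool) : Prop :=
  ∃ (a : Fin k → ℝ) (b : Fin k → Fin d → ℝ),
    ∀ x, f x = true ↔ ∀ i, ∑ j, b i j * (x j : ℝ) ≤ a i

/-- The class `T(d,n,k)` of `k`-threshold functions. -/
def TClass (d n k : ℕ) : Set ((Fin d → Fin n) → Bool) := {f | IsKThreshold d n k f}

/-- The convex hull of the `1`-set of `f` (that is, `P(f)`). -/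
def hullOne (d n : ℕ) (f : (Fin d → Fin n) → Bool) : Set (Fin d → ℝ) :=
  convexHull ℝ (toR '' {x | f x = true})

/-- `f` belongs to `T(d,n,*)`: its `1`-set equals `Conv(M₁(f)) ∩ E_n^d`. -/
def LatticeConvex {d n : ℕ} (f : (Fin d → Fin n) → Bool) : Prop :=
  ∀ x, f x = true ↔ toR x ∈ hullOne d n f

/-- The class `T(d,n,*)` of all `k`-threshold functions for all `k`. -/
def TStar (d n : ℕ) : Set ((Fin d → Fin n) → Bool) := {f | LatticeConvex f}

/-- `T` is a teaching set of `f` with respect to the class `C`. -/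
def TeachingSet {α : Type*} (C : Set (α → Bool)) (f : α → Bool) (T : Set α) : Prop :=
  ∀ g ∈ C, (∀ x ∈ T, g x = f x) → g = f

/-- `x` is an essential point of `f` with respect to the class `D`. -/
def Essential {α : Type*} (D : Set (α → Bool)) (f : α → Bool) (x : α) : Prop :=
  ∃ g ∈ D, g x ≠ f x ∧ ∀ y, y ≠ x → g y = f y

/-- The set of vertices of `P(f)` (as lattice points). -/
def VertSet (d n : ℕ) (f : (Fin d → Fin n) → Bool) : Set (Fin d → Fin n) :=
  {x | toR x ∈ Set.extremePoints ℝ (hullOne d n f)}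

/-- The set `D(f) = {x ∈ M₀(f) : Conv(P(f) ∪ {x}) ∩ M₀(f) = {x}}`. -/
def DSet (d n : ℕ) (f : (Fin d → Fin n) → Bool) : Set (Fin d → Fin n) :=
  {x | f x = false ∧
    ∀ y, toR y ∈ convexHull ℝ (toR '' {z | f z = true} ∪ {toR x}) → f y = false → y = x}

/-- `a₁ x₁ + a₂ x₂ ≤ a₀` is a primitive edge inequality of the planar convex set
`P`: the coefficients are coprime integers, the inequality holds on `P`, and the
corresponding line contains an edge of `P` (at least two points of `P`). -/
def IsEdgeIneq (P : Set (Fin 2 → ℝ)) (a₁ a₂ a₀ : ℤ) : Prop :=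
  Int.gcd a₁ a₂ = 1 ∧ (∀ y ∈ P, (a₁ : ℝ) * y 0 + (a₂ : ℝ) * y 1 ≤ (a₀ : ℝ)) ∧
  ∃ u ∈ P, ∃ v ∈ P, u ≠ v ∧
    (a₁ : ℝ) * u 0 + (a₂ : ℝ) * u 1 = (a₀ : ℝ) ∧
    (a₁ : ℝ) * v 0 + (a₂ : ℝ) * v 1 = (a₀ : ℝ)

/-- The extended polygon `P'(f)`: each primitive edge inequality of `P(f)`
relaxed by `1`. -/
def Pprime (n : ℕ) (f : (Fin 2 → Fin n) → Bool) : Set (Fin 2 → ℝ) :=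
  {y | ∀ a₁ a₂ a₀ : ℤ, IsEdgeIneq (hullOne 2 n f) a₁ a₂ a₀ →
    (a₁ : ℝ) * y 0 + (a₂ : ℝ) * y 1 ≤ (a₀ : ℝ) + 1}


noncomputable section Stmt12Aux



/-- linear functional `y ↦ c₁ y₀ + c₂ y₁` -/
def gmap (c₁ c₂ : ℝ) : (Fin 2 → ℝ) →ₗ[ℝ] ℝ :=
  c₁ • LinearMap.proj 0 + c₂ • LinearMap.proj 1

lemma gmap_apply (c₁ c₂ : ℝ) (y : Fin 2 → ℝ) : gmap c₁ c₂ y = c₁ * y 0 + c₂ * y 1 := rfl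

lemma hull_le {S : Set (Fin 2 → ℝ)} {c₁ c₂ r : ℝ} (h : ∀ s ∈ S, c₁ * s 0 + c₂ * s 1 ≤ r) :
    ∀ p ∈ convexHull ℝ S, c₁ * p 0 + c₂ * p 1 ≤ r := by
  intro p hp
  have hsub : convexHull ℝ S ⊆ {y | gmap c₁ c₂ y ≤ r} :=
    convexHull_min (fun s hs => by simpa [gmap_apply] using h s hs)
      (convex_halfSpace_le (gmap c₁ c₂).isLinear r)
  simpa [gmap_apply] using hsub hp

/-- a convex hull inside a hyperplane has empty interior -/
lemma interior_empty_of_line {S : Set (Fin 2 → ℝ)} {c₁ c₂ r : ℝ} (hc : ¬ (c₁ = 0 ∧ c₂ = 0))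
    (h : ∀ s ∈ S, c₁ * s 0 + c₂ * s 1 = r) : interior (convexHull ℝ S) = ∅ := by
  have hsub : convexHull ℝ S ⊆ {y | gmap c₁ c₂ y = r} :=
    convexHull_min (fun s hs => by simpa [gmap_apply] using h s hs)
      (convex_hyperplane (gmap c₁ c₂).isLinear r)
  by_contra hne
  obtain ⟨p, hp⟩ := Set.nonempty_iff_ne_empty.2 hne
  have hp' : p ∈ interior {y | gmap c₁ c₂ y = r} := interior_mono hsub hp
  obtain ⟨ε, hε, hball⟩ := Metric.isOpen_iff.1 isOpen_interior p hp'
  set c : Fin 2 → ℝ := ![c₁, c₂] with hcdef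
  have hcnorm : ‖c‖ ≠ 0 ∨ True := Or.inr trivial
  set t : ℝ := ε / (2 * (‖c‖ + 1)) with htdef
  have hcn : (0:ℝ) ≤ ‖c‖ := norm_nonneg _
  have ht : 0 < t := by positivity
  have hmem : p + t • c ∈ Metric.ball p ε := by
    rw [Metric.mem_ball, dist_eq_norm]
    have : p + t • c - p = t • c := by abel
    rw [this, norm_smul]
    have h1 : ‖t‖ = t := abs_of_pos ht
    rw [h1]
    calc t * ‖c‖ ≤ t * (‖c‖ + 1) := by nlinarith
      _ = ε / (2 * (‖c‖ + 1)) * (‖c‖ + 1) := rfl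
      _ < ε := by rw [div_mul_eq_mul_div]; rw [div_lt_iff₀ (by positivity)]; nlinarith
  have h2 := interior_subset (hball hmem)
  have h3 := interior_subset hp'
  simp only [Set.mem_setOf_eq, gmap_apply] at h2 h3
  have hc0 : c 0 = c₁ := by simp [hcdef]
  have hc1 : c 1 = c₂ := by simp [hcdef]
  have : c₁ * (p 0 + t * c₁) + c₂ * (p 1 + t * c₂) = r := by
    simpa [Pi.add_apply, Pi.smul_apply, hc0, hc1, smul_eq_mul] using h2
  have hsq : t * (c₁ ^ 2 + c₂ ^ 2) = 0 := by nlinarith [h3]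
  have : c₁ ^ 2 + c₂ ^ 2 = 0 := by
    rcases mul_eq_zero.1 hsq with h | h
    · exact absurd h (ne_of_gt ht)
    · exact h
  have hc1' : c₁ = 0 := by nlinarith [sq_nonneg c₁, sq_nonneg c₂]
  have hc2' : c₂ = 0 := by nlinarith [sq_nonneg c₁, sq_nonneg c₂]
  exact hc ⟨hc1', hc2'⟩

/-- face membership: a hull point achieving the max lies in hull of maximizers -/
lemma face_mem {F : Finset (Fin 2 → ℝ)} {c₁ c₂ r : ℝ}
    (hle : ∀ s ∈ F, c₁ * s 0 + c₂ * s 1 ≤ r) {u : Fin 2 → ℝ}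
    (hu : u ∈ convexHull ℝ (F : Set (Fin 2 → ℝ))) (hur : c₁ * u 0 + c₂ * u 1 = r) :
    u ∈ convexHull ℝ ((F.filter (fun s => c₁ * s 0 + c₂ * s 1 = r)) : Set (Fin 2 → ℝ)) := by
  classical
  rw [Finset.convexHull_eq] at hu
  obtain ⟨w, hw0, hw1, hwc⟩ := hu
  set g : (Fin 2 → ℝ) → ℝ := fun y => c₁ * y 0 + c₂ * y 1 with hg
  have hgu : g u = ∑ s ∈ F, w s * g s := by
    have h1 : u = ∑ s ∈ F, w s • s := by
      rw [← hwc, Finset.centerMass_eq_of_sum_1 _ _ hw1]; rfl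
    have h2 : g u = gmap c₁ c₂ u := rfl
    rw [h2, h1, map_sum]
    refine Finset.sum_congr rfl fun s hs => ?_
    rw [map_smul, smul_eq_mul]; rfl
  have hzero : ∀ s ∈ F, w s * (r - g s) = 0 := by
    have hsum : ∑ s ∈ F, w s * (r - g s) = 0 := by
      have : ∑ s ∈ F, w s * r = r := by rw [← Finset.sum_mul, hw1, one_mul]
      have hexp : ∑ s ∈ F, w s * (r - g s) = (∑ s ∈ F, w s * r) - ∑ s ∈ F, w s * g s := by
        rw [← Finset.sum_sub_distrib]; exact Finset.sum_congr rfl fun s _ => by ring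
      have hur' : g u = r := hur
      rw [hexp, this, ← hgu, hur']; ring
    intro s hs
    exact (Finset.sum_eq_zero_iff_of_nonneg (fun i hi =>
      mul_nonneg (hw0 i hi) (by have := hle i hi; simp only [hg]; linarith))).1 hsum s hs
  set F₀ := F.filter (fun s => c₁ * s 0 + c₂ * s 1 = r) with hF₀
  have hvanish : ∀ s ∈ F, s ∉ F₀ → w s = 0 := by
    intro s hs hns
    have hgs : ¬ (g s = r) := by
      intro hgs; exact hns (Finset.mem_filter.2 ⟨hs, hgs⟩)
    rcases mul_eq_zero.1 (hzero s hs) with h | h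
    · exact h
    · exact absurd (by linarith : g s = r) hgs
  have hcm : F₀.centerMass w id = F.centerMass w id :=
    Finset.centerMass_subset id (Finset.filter_subset _ _) hvanish
  have hsum0 : ∑ s ∈ F₀, w s = 1 := by
    rw [Finset.sum_subset (Finset.filter_subset _ _) (fun s hs hns => hvanish s hs hns)]
    exact hw1
  have := Finset.centerMass_mem_convexHull F₀
    (fun i hi => hw0 i (Finset.filter_subset _ _ hi)) (by rw [hsum0]; norm_num)
    (fun i hi => Finset.mem_coe.2 hi)
  have hid : (F₀.centerMass w fun i => i) = F₀.centerMass w id := rfl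
  rw [hid, hcm, hwc] at this
  exact this





lemma clm_decomp (φ : (Fin 2 → ℝ) →L[ℝ] ℝ) (y : Fin 2 → ℝ) :
    φ y = φ (Pi.single 0 1) * y 0 + φ (Pi.single 1 1) * y 1 := by
  have h : y = y 0 • (Pi.single 0 1 : Fin 2 → ℝ) + y 1 • (Pi.single 1 1 : Fin 2 → ℝ) := by
    funext i
    fin_cases i <;> simp [Pi.single_apply]
  conv_lhs => rw [h]
  rw [map_add, map_smul, map_smul, smul_eq_mul, smul_eq_mul]
  ring

lemma rat_sep {F : Finset (Fin 2 → ℝ)} {z : Fin 2 → ℝ}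
    (hz : z ∉ convexHull ℝ (F : Set (Fin 2 → ℝ))) :
    ∃ b₁ b₂ : ℚ, ∀ s ∈ F, (b₁:ℝ) * s 0 + (b₂:ℝ) * s 1 < (b₁:ℝ) * z 0 + (b₂:ℝ) * z 1 := by
  rcases F.eq_empty_or_nonempty with rfl | hne
  · exact ⟨0, 0, by simp⟩
  obtain ⟨φ, u, hφ, hu⟩ := geometric_hahn_banach_closed_point
    (convex_convexHull ℝ (F : Set (Fin 2 → ℝ)))
    (F.finite_toSet.isClosed_convexHull ℝ) hz
  set c₁ := φ (Pi.single 0 1) with hc₁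
  set c₂ := φ (Pi.single 1 1) with hc₂
  have hcs : ∀ s ∈ F, c₁ * s 0 + c₂ * s 1 < u := by
    intro s hs
    have := hφ s (subset_convexHull ℝ _ (Finset.mem_coe.2 hs))
    rwa [clm_decomp φ s] at this
  have hcz : u < c₁ * z 0 + c₂ * z 1 := by
    have := hu; rwa [clm_decomp φ z] at this
  set δ : ℝ := c₁ * z 0 + c₂ * z 1 - u with hδdef
  have hδ : 0 < δ := by simp only [hδdef]; linarith
  set B : ℝ := (F.sup' hne (fun s => |s 0| + |s 1|)) ⊔ (|z 0| + |z 1|) with hBdef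
  have hBz : |z 0| + |z 1| ≤ B := le_sup_right
  have hBs : ∀ s ∈ F, |s 0| + |s 1| ≤ B :=
    fun s hs => le_trans (Finset.le_sup' (fun s => |s 0| + |s 1|) hs) le_sup_left
  have hB0 : 0 ≤ B := le_trans (by positivity) hBz
  set ε : ℝ := δ / (4 * (B + 1)) with hεdef
  have hε : 0 < ε := by positivity
  have hεδ : ε * (4 * (B + 1)) = δ := by
    rw [hεdef]; exact div_mul_cancel₀ _ (ne_of_gt (by linarith))
  obtain ⟨q₁, hq₁l, hq₁r⟩ := exists_rat_btwn (show c₁ < c₁ + ε by linarith)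
  obtain ⟨q₂, hq₂l, hq₂r⟩ := exists_rat_btwn (show c₂ < c₂ + ε by linarith)
  refine ⟨q₁, q₂, fun s hs => ?_⟩
  have h1 : 0 ≤ (q₁:ℝ) - c₁ := by linarith
  have h2 : (q₁:ℝ) - c₁ ≤ ε := by linarith
  have h3 : 0 ≤ (q₂:ℝ) - c₂ := by linarith
  have h4 : (q₂:ℝ) - c₂ ≤ ε := by linarith
  have hzs := hBs s hs
  have key : ∀ dq v : ℝ, 0 ≤ dq → dq ≤ ε → |v| ≤ 2 * B → -(ε * (2 * B)) ≤ dq * v := by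
    intro dq v k0 k1 k2
    have k3 : -(2 * B) ≤ v := neg_le_of_abs_le k2
    have k4 : dq * (-(2 * B)) ≤ dq * v := mul_le_mul_of_nonneg_left k3 k0
    nlinarith
  have habs0 : |z 0 - s 0| ≤ 2 * B := by
    calc |z 0 - s 0| ≤ |z 0| + |s 0| := abs_sub _ _
      _ ≤ 2 * B := by
          have := abs_nonneg (z 1); have := abs_nonneg (s 1); linarith
  have habs1 : |z 1 - s 1| ≤ 2 * B := by
    calc |z 1 - s 1| ≤ |z 1| + |s 1| := abs_sub _ _
      _ ≤ 2 * B := by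
          have := abs_nonneg (z 0); have := abs_nonneg (s 0); linarith
  have e0 := key _ _ h1 h2 habs0
  have e1 := key _ _ h3 h4 habs1
  have hc : c₁ * z 0 + c₂ * z 1 - (c₁ * s 0 + c₂ * s 1) > δ := by
    have := hcs s hs; simp only [hδdef]; linarith
  have expand : (q₁:ℝ) * z 0 + (q₂:ℝ) * z 1 - ((q₁:ℝ) * s 0 + (q₂:ℝ) * s 1)
      = (c₁ * z 0 + c₂ * z 1 - (c₁ * s 0 + c₂ * s 1))
        + ((q₁:ℝ) - c₁) * (z 0 - s 0) + ((q₂:ℝ) - c₂) * (z 1 - s 1) := by ring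
  nlinarith [e0, e1, hc, hεδ, hε, hB0]






/-- integer dot product -/
def zdot (a v : Fin 2 → ℤ) : ℤ := a 0 * v 0 + a 1 * v 1

/-- cast of an integer vector to `ℝ²` -/
def zR (v : Fin 2 → ℤ) : Fin 2 → ℝ := fun i => (v i : ℝ)

lemma zR_inj {v w : Fin 2 → ℤ} (h : zR v = zR w) : v = w := by
  funext i
  have := congrFun h i
  simp only [zR] at this
  exact_mod_cast this

lemma tilt {F : Finset (Fin 2 → ℤ)} {u w b d : Fin 2 → ℤ} (hu : u ∈ F)
    (hmax : ∀ s ∈ F, zdot b s ≤ zdot b u)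
    (hw : 1 ≤ zdot b w) (hdw : zdot d w = 0)
    (hplus : ∃ s ∈ F, zdot d u < zdot d s) :
    ∃ a : Fin 2 → ℤ, (∀ s ∈ F, zdot a s ≤ zdot a u) ∧ 1 ≤ zdot a w ∧
      ∃ v ∈ F, v ≠ u ∧ zdot a v = zdot a u := by
  classical
  set Fp := F.filter (fun s => zdot d u < zdot d s) with hFp
  have hFpne : Fp.Nonempty := by
    obtain ⟨s, hs, h⟩ := hplus; exact ⟨s, Finset.mem_filter.2 ⟨hs, h⟩⟩
  set q : (Fin 2 → ℤ) → ℚ :=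
    fun s => ((zdot b u - zdot b s : ℤ) : ℚ) / ((zdot d s - zdot d u : ℤ) : ℚ) with hq
  obtain ⟨s₀, hs₀, hmin⟩ := Fp.exists_min_image q hFpne
  have hs₀F : s₀ ∈ F := (Finset.mem_filter.1 hs₀).1
  have hd₀ : (0:ℤ) < zdot d s₀ - zdot d u := by
    have := (Finset.mem_filter.1 hs₀).2; omega
  have hd₀Q : (0:ℚ) < ((zdot d s₀ - zdot d u : ℤ) : ℚ) := by exact_mod_cast hd₀
  set r : ℚ := q s₀ with hr
  have hr0 : 0 ≤ r := by
    apply div_nonneg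
    · have := hmax s₀ hs₀F
      exact_mod_cast (by omega : (0:ℤ) ≤ zdot b u - zdot b s₀)
    · exact le_of_lt hd₀Q
  have hnum0 : 0 ≤ r.num := Rat.num_nonneg.2 hr0
  have hden0 : (0:ℤ) < (r.den : ℤ) := by exact_mod_cast r.pos
  set a : Fin 2 → ℤ := fun i => (r.den : ℤ) * b i + r.num * d i with ha
  have hkey : ∀ s t : Fin 2 → ℤ, zdot a s - zdot a t =
      (r.den : ℤ) * (zdot b s - zdot b t) + r.num * (zdot d s - zdot d t) := by
    intro s t; simp only [ha, zdot]; ring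
  -- the rational inequality r ≤ q s, turned integral
  have hineq : ∀ s ∈ Fp, r.num * (zdot d s - zdot d u) ≤ (r.den : ℤ) * (zdot b u - zdot b s) := by
    intro s hs
    have hds : (0:ℚ) < ((zdot d s - zdot d u : ℤ) : ℚ) := by
      have := (Finset.mem_filter.1 hs).2
      exact_mod_cast (by omega : (0:ℤ) < zdot d s - zdot d u)
    have hrq : r ≤ q s := hmin s hs
    have hdenne : ((r.den:ℚ)) ≠ 0 := by positivity
    have hrden : (r.num : ℚ) = r * (r.den : ℚ) := (Rat.mul_den_eq_num r).symm
    have hQ : (r.num : ℚ) * ((zdot d s - zdot d u : ℤ) : ℚ)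
        ≤ ((r.den : ℤ) : ℚ) * ((zdot b u - zdot b s : ℤ) : ℚ) := by
      rw [hrden]
      have hdenQ : (0:ℚ) < (r.den : ℚ) := by exact_mod_cast r.pos
      have h1 : r * ((zdot d s - zdot d u : ℤ) : ℚ) ≤ ((zdot b u - zdot b s : ℤ) : ℚ) := by
        rw [hq] at hrq
        calc r * ((zdot d s - zdot d u : ℤ) : ℚ)
            ≤ (((zdot b u - zdot b s : ℤ) : ℚ) / ((zdot d s - zdot d u : ℤ) : ℚ))
              * ((zdot d s - zdot d u : ℤ) : ℚ) :=
              mul_le_mul_of_nonneg_right hrq (le_of_lt hds)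
          _ = ((zdot b u - zdot b s : ℤ) : ℚ) := div_mul_cancel₀ _ (ne_of_gt hds)
      calc r * (r.den : ℚ) * ((zdot d s - zdot d u : ℤ) : ℚ)
          = (r * ((zdot d s - zdot d u : ℤ) : ℚ)) * (r.den : ℚ) := by ring
        _ ≤ ((zdot b u - zdot b s : ℤ) : ℚ) * (r.den : ℚ) :=
            mul_le_mul_of_nonneg_right h1 (by positivity)
        _ = ((r.den : ℤ) : ℚ) * ((zdot b u - zdot b s : ℤ) : ℚ) := by push_cast; ring
    exact_mod_cast hQ
  have heq₀ : r.num * (zdot d s₀ - zdot d u) = (r.den : ℤ) * (zdot b u - zdot b s₀) := by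
    have hrq : r * ((zdot d s₀ - zdot d u : ℤ) : ℚ) = ((zdot b u - zdot b s₀ : ℤ) : ℚ) := by
      rw [hr, hq]; exact div_mul_cancel₀ _ (ne_of_gt hd₀Q)
    have hdenne : ((r.den:ℚ)) ≠ 0 := by positivity
    have hrden : (r.num : ℚ) = r * (r.den : ℚ) := (Rat.mul_den_eq_num r).symm
    have hQ : (r.num : ℚ) * ((zdot d s₀ - zdot d u : ℤ) : ℚ)
        = ((r.den : ℤ) : ℚ) * ((zdot b u - zdot b s₀ : ℤ) : ℚ) := by
      rw [hrden, mul_comm r ((r.den : ℚ)), mul_assoc, hrq]; push_cast; ring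
    exact_mod_cast hQ
  refine ⟨a, ?_, ?_, s₀, hs₀F, ?_, ?_⟩
  · intro s hs
    by_cases hsp : s ∈ Fp
    · have h1 := hineq s hsp
      have h2 := hkey s u
      have h3 : (r.den : ℤ) * (zdot b s - zdot b u) = -((r.den : ℤ) * (zdot b u - zdot b s)) := by
        ring
      linarith
    · have hd : zdot d s - zdot d u ≤ 0 := by
        have : ¬ (zdot d u < zdot d s) := fun h => hsp (Finset.mem_filter.2 ⟨hs, h⟩)
        omega
      have hb : zdot b s - zdot b u ≤ 0 := by have := hmax s hs; omega
      have := hkey s u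
      nlinarith
  · have : zdot a w = (r.den : ℤ) * zdot b w + r.num * zdot d w := by
      simp only [ha, zdot]; ring
    rw [this, hdw]
    nlinarith
  · intro h
    rw [h] at hs₀
    have := (Finset.mem_filter.1 hs₀).2
    omega
  · have h2 := hkey s₀ u
    have h3 : (r.den : ℤ) * (zdot b s₀ - zdot b u) = -((r.den : ℤ) * (zdot b u - zdot b s₀)) := by
      ring
    linarith [heq₀]



/-- Extraction of a violated primitive edge inequality, integer version. -/
lemma core {G : Finset (Fin 2 → ℤ)} {z : Fin 2 → ℤ}
    (hG : (interior (convexHull ℝ (zR '' (G : Set (Fin 2 → ℤ))))).Nonempty)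
    (hz : zR z ∉ convexHull ℝ (zR '' (G : Set (Fin 2 → ℤ)))) :
    ∃ a : Fin 2 → ℤ, ∃ a₀ : ℤ, Int.gcd (a 0) (a 1) = 1 ∧ (∀ s ∈ G, zdot a s ≤ a₀) ∧
      (∃ u ∈ G, ∃ v ∈ G, u ≠ v ∧ zdot a u = a₀ ∧ zdot a v = a₀) ∧ a₀ + 1 ≤ zdot a z := by
  classical
  set F : Finset (Fin 2 → ℝ) := G.image zR with hF
  have hFcoe : (F : Set (Fin 2 → ℝ)) = zR '' (G : Set (Fin 2 → ℤ)) := by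
    simp [hF, Finset.coe_image]
  -- rational separation
  have hzF : zR z ∉ convexHull ℝ (F : Set (Fin 2 → ℝ)) := by rw [hFcoe]; exact hz
  obtain ⟨q₁, q₂, hqsep⟩ := rat_sep hzF
  -- to integer coefficients
  set k : ℝ := (q₁.den : ℝ) * (q₂.den : ℝ) with hk
  have hkpos : 0 < k := by positivity
  set b : Fin 2 → ℤ := ![q₁.num * (q₂.den : ℤ), q₂.num * (q₁.den : ℤ)] with hb
  have hbsep : ∀ s ∈ G, zdot b s < zdot b z := by
    intro s hs
    have hsF : zR s ∈ F := Finset.mem_image_of_mem _ hs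
    have h := hqsep (zR s) hsF
    have hb0 : ((b 0 : ℤ) : ℝ) = (q₁ : ℝ) * k := by
      simp only [hb, hk]
      push_cast [Rat.cast_def]
      field_simp
    have hb1 : ((b 1 : ℤ) : ℝ) = (q₂ : ℝ) * k := by
      simp only [hb, hk]
      push_cast [Rat.cast_def]
      field_simp
    have hreal : ((zdot b s : ℤ) : ℝ) < ((zdot b z : ℤ) : ℝ) := by
      have e1 : ((zdot b s : ℤ) : ℝ) = ((q₁:ℝ) * (zR s) 0 + (q₂:ℝ) * (zR s) 1) * k := by
        simp only [zdot, zR]; push_cast; rw [hb0, hb1]; ring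
      have e2 : ((zdot b z : ℤ) : ℝ) = ((q₁:ℝ) * (zR z) 0 + (q₂:ℝ) * (zR z) 1) * k := by
        simp only [zdot, zR]; push_cast; rw [hb0, hb1]; ring
      rw [e1, e2]
      exact mul_lt_mul_of_pos_right h hkpos
    exact_mod_cast hreal
  -- G nonempty
  have hGne : G.Nonempty := by
    by_contra hGe
    rw [Finset.not_nonempty_iff_eq_empty] at hGe
    rw [hGe] at hG
    simp at hG
  -- maximizer
  obtain ⟨u, huG, humax⟩ := G.exists_max_image (zdot b) hGne
  set w : Fin 2 → ℤ := fun i => z i - u i with hw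
  have hzw : ∀ c : Fin 2 → ℤ, zdot c w = zdot c z - zdot c u := by
    intro c; simp only [zdot, hw]; ring
  have hbw : 1 ≤ zdot b w := by
    rw [hzw]
    have := hbsep u huG
    omega
  set d : Fin 2 → ℤ := ![-(w 1), w 0] with hd
  have hdw : zdot d w = 0 := by simp [zdot, hd]; ring
  -- apply tilt in one of the two directions
  have happly : (∃ s ∈ G, zdot d u < zdot d s) ∨ (∃ s ∈ G, zdot (-d) u < zdot (-d) s) →
      ∃ a : Fin 2 → ℤ, (∀ s ∈ G, zdot a s ≤ zdot a u) ∧ 1 ≤ zdot a w ∧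
        ∃ v ∈ G, v ≠ u ∧ zdot a v = zdot a u := by
    rintro (h | h)
    · exact tilt huG humax hbw hdw h
    · have hdw' : zdot (-d) w = 0 := by
        have hdw2 : d 0 * w 0 + d 1 * w 1 = 0 := hdw
        simp only [zdot, Pi.neg_apply]
        linarith
      exact tilt huG humax hbw hdw' h
  have hcases : (∃ s ∈ G, zdot d u < zdot d s) ∨ (∃ s ∈ G, zdot (-d) u < zdot (-d) s) := by
    by_contra hno
    push_neg at hno
    obtain ⟨h1, h2⟩ := hno
    have hall : ∀ s ∈ G, zdot d s = zdot d u := by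
      intro s hs
      have t1 := h1 s hs
      have t2 := h2 s hs
      simp only [zdot, Pi.neg_apply] at t1 t2 ⊢
      linarith
    -- all points on a line: contradiction with nonempty interior
    have hdne : ¬ ((d 0 : ℝ) = 0 ∧ (d 1 : ℝ) = 0) := by
      rintro ⟨e0, e1⟩
      have w1 : w 1 = 0 := by
        have : (d 0 : ℤ) = -(w 1) := by simp [hd]
        have : ((w 1 : ℤ) : ℝ) = 0 := by
          rw [show ((w 1 : ℤ) : ℝ) = -((d 0 : ℤ) : ℝ) by rw [this]; push_cast; ring, e0]; ring
        exact_mod_cast this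
      have w0 : w 0 = 0 := by
        have : (d 1 : ℤ) = w 0 := by simp [hd]
        have h0 : ((w 0 : ℤ) : ℝ) = 0 := by rw [← this]; exact_mod_cast e1
        exact_mod_cast h0
      simp [zdot, w0, w1] at hbw
    have hline := interior_empty_of_line (S := zR '' (G : Set (Fin 2 → ℤ)))
      (c₁ := (d 0 : ℝ)) (c₂ := (d 1 : ℝ)) (r := ((zdot d u : ℤ) : ℝ)) hdne ?_
    · rw [hline] at hG; simp at hG
    · rintro p ⟨s, hs, rfl⟩
      have hcast : (d 0 : ℝ) * (zR s) 0 + (d 1 : ℝ) * (zR s) 1 = ((zdot d s : ℤ) : ℝ) := by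
        simp only [zdot, zR]; push_cast; ring
      rw [hcast, hall s hs]
  obtain ⟨a', ha'max, ha'w, v, hvG, hvu, hveq⟩ := happly hcases
  -- primitivize
  have ha'ne : ¬ (a' 0 = 0 ∧ a' 1 = 0) := by
    rintro ⟨e0, e1⟩
    simp [zdot, e0, e1] at ha'w
  set g : ℤ := (Int.gcd (a' 0) (a' 1) : ℤ) with hg
  have hgne : Int.gcd (a' 0) (a' 1) ≠ 0 := by
    intro h
    exact ha'ne (Int.gcd_eq_zero_iff.1 h)
  have hgpos : 0 < g := by
    rw [hg]
    exact Int.natCast_pos.mpr (Nat.pos_of_ne_zero hgne)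
  set a : Fin 2 → ℤ := fun i => a' i / g with ha
  have hmul : ∀ i, a' i = g * a i := by
    intro i
    fin_cases i
    · exact (Int.mul_ediv_cancel' (Int.gcd_dvd_left _ _)).symm
    · exact (Int.mul_ediv_cancel' (Int.gcd_dvd_right _ _)).symm
  have hzfact : ∀ v : Fin 2 → ℤ, zdot a' v = g * zdot a v := by
    intro v; simp only [zdot]
    rw [hmul 0, hmul 1]; ring
  have hgcd : Int.gcd (a 0) (a 1) = 1 := by
    have := Int.gcd_div_gcd_div_gcd (Nat.pos_of_ne_zero hgne)
    simpa [ha, hg] using this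
  refine ⟨a, zdot a u, hgcd, ?_, ⟨u, huG, v, hvG, fun h => hvu h.symm, rfl, ?_⟩, ?_⟩
  · intro s hs
    have := ha'max s hs
    rw [hzfact, hzfact] at this
    exact le_of_mul_le_mul_left this hgpos
  · have := hveq
    rw [hzfact, hzfact] at this
    exact mul_left_cancel₀ (ne_of_gt hgpos) this
  · have h1 : 1 ≤ zdot a w := by
      rw [hzfact] at ha'w
      nlinarith [ha'w, hgpos]
    have := hzw a
    omega

end Stmt12Aux



/-- Triangle construction, oriented version: `v - u = m • (-(a 1), a 0)` with `m ≥ 1`. -/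
lemma triangle_aux {a u v x : Fin 2 → ℤ} {a₀ p q m : ℤ}
    (hbez : a 0 * p + a 1 * q = 1) (hm : 1 ≤ m)
    (hΔ0 : v 0 - u 0 = -(m * a 1)) (hΔ1 : v 1 - u 1 = m * a 0)
    (hu : zdot a u = a₀) (hx : a₀ + 2 ≤ zdot a x) :
    ∃ y : Fin 2 → ℤ, zdot a y = a₀ + 1 ∧
      zR y ∈ convexHull ℝ {zR u, zR v, zR x} := by
  classical
  obtain ⟨h, hh⟩ : ∃ c : ℤ, c = zdot a x - a₀ := ⟨_, rfl⟩
  have hh2 : 2 ≤ h := by omega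
  have hhne : h ≠ 0 := by omega
  obtain ⟨β, hβ⟩ : ∃ c : ℤ, c = p * (x 1 - u 1) - q * (x 0 - u 0) := ⟨_, rfl⟩
  have hzd : a 0 * (x 0 - u 0) + a 1 * (x 1 - u 1) = h := by
    simp only [zdot] at hu
    rw [hh]
    simp only [zdot]
    linear_combination -hu
  have hc0 : x 0 - u 0 = h * p - β * a 1 := by
    rw [hβ]
    linear_combination (-(x 0 - u 0)) * hbez + p * hzd
  have hc1 : x 1 - u 1 = h * q + β * a 0 := by
    rw [hβ]
    linear_combination (-(x 1 - u 1)) * hbez + q * hzd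
  obtain ⟨γ, hγ⟩ : ∃ c : ℤ, c = -((-β) / h) := ⟨_, rfl⟩
  obtain ⟨δ, hδdef⟩ : ∃ c : ℤ, c = h * γ - β := ⟨_, rfl⟩
  have hδmod : δ = (-β) % h := by
    rw [hδdef, hγ, Int.emod_def]; ring
  have hδ0 : 0 ≤ δ := by rw [hδmod]; exact Int.emod_nonneg _ hhne
  have hδlt : δ ≤ h - 1 := by
    have := Int.emod_lt_of_pos (-β) (show (0:ℤ) < h by omega)
    omega
  refine ⟨![u 0 + p - γ * a 1, u 1 + q + γ * a 0], ?_, ?_⟩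
  · simp only [zdot, Matrix.cons_val_zero, Matrix.cons_val_one, Matrix.head_cons]
    simp only [zdot] at hu
    linear_combination hu + hbez
  · obtain ⟨c₁, hc₁⟩ : ∃ c : ℤ, c = h * m - δ - m := ⟨_, rfl⟩
    have hc₁0 : 0 ≤ c₁ := by rw [hc₁]; nlinarith
    have hApos : (0:ℤ) < c₁ + δ := by rw [hc₁]; nlinarith
    have hDpos : (0:ℤ) < h * m := by nlinarith
    have hADm : c₁ + δ + m = h * m := by rw [hc₁]; ring
    have hid0 : (h * m) * (u 0 + p - γ * a 1) = c₁ * u 0 + δ * v 0 + m * x 0 := by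
      rw [hc₁]
      linear_combination (-m) * hc0 + (-δ) * hΔ0 + (m * a 1) * hδdef
    have hid1 : (h * m) * (u 1 + q + γ * a 0) = c₁ * u 1 + δ * v 1 + m * x 1 := by
      rw [hc₁]
      linear_combination (-m) * hc1 + (-δ) * hΔ1 + (-(m * a 0)) * hδdef
    have hconv : Convex ℝ (convexHull ℝ ({zR u, zR v, zR x} : Set (Fin 2 → ℝ))) :=
      convex_convexHull ℝ _
    have hUC : zR u ∈ convexHull ℝ ({zR u, zR v, zR x} : Set (Fin 2 → ℝ)) :=
      subset_convexHull ℝ _ (Set.mem_insert _ _)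
    have hVC : zR v ∈ convexHull ℝ ({zR u, zR v, zR x} : Set (Fin 2 → ℝ)) :=
      subset_convexHull ℝ _ (Set.mem_insert_of_mem _ (Set.mem_insert _ _))
    have hXC : zR x ∈ convexHull ℝ ({zR u, zR v, zR x} : Set (Fin 2 → ℝ)) :=
      subset_convexHull ℝ _ (Set.mem_insert_of_mem _ (Set.mem_insert_of_mem _ rfl))
    have hAR : (0:ℝ) < ((c₁ : ℝ) + (δ : ℝ)) := by exact_mod_cast hApos
    have hDR : (0:ℝ) < ((h : ℝ) * (m : ℝ)) := by exact_mod_cast hDpos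
    have hc₁R : (0:ℝ) ≤ (c₁ : ℝ) := by exact_mod_cast hc₁0
    have hδR : (0:ℝ) ≤ (δ : ℝ) := by exact_mod_cast hδ0
    have hmR : (0:ℝ) < (m : ℝ) := by exact_mod_cast (by omega : (0:ℤ) < m)
    have hQ : ((c₁:ℝ)/((c₁:ℝ)+(δ:ℝ))) • zR u + ((δ:ℝ)/((c₁:ℝ)+(δ:ℝ))) • zR v
        ∈ convexHull ℝ ({zR u, zR v, zR x} : Set (Fin 2 → ℝ)) := by
      apply hconv hUC hVC
      · positivity
      · positivity
      · field_simp
    have hfin : (((c₁:ℝ)+(δ:ℝ))/((h:ℝ)*(m:ℝ))) •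
          (((c₁:ℝ)/((c₁:ℝ)+(δ:ℝ))) • zR u + ((δ:ℝ)/((c₁:ℝ)+(δ:ℝ))) • zR v)
          + ((m:ℝ)/((h:ℝ)*(m:ℝ))) • zR x
        ∈ convexHull ℝ ({zR u, zR v, zR x} : Set (Fin 2 → ℝ)) := by
      apply hconv hQ hXC
      · positivity
      · positivity
      · have hADmR : (c₁:ℝ) + (δ:ℝ) + (m:ℝ) = (h:ℝ) * (m:ℝ) := by exact_mod_cast hADm
        field_simp
        linarith
    have hyeq : zR ![u 0 + p - γ * a 1, u 1 + q + γ * a 0] =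
        (((c₁:ℝ)+(δ:ℝ))/((h:ℝ)*(m:ℝ))) •
          (((c₁:ℝ)/((c₁:ℝ)+(δ:ℝ))) • zR u + ((δ:ℝ)/((c₁:ℝ)+(δ:ℝ))) • zR v)
          + ((m:ℝ)/((h:ℝ)*(m:ℝ))) • zR x := by
      funext i
      have hidR : ((h:ℝ) * (m:ℝ)) * ((zR ![u 0 + p - γ * a 1, u 1 + q + γ * a 0]) i)
          = (c₁:ℝ) * (zR u i) + (δ:ℝ) * (zR v i) + (m:ℝ) * (zR x i) := by
        fin_cases i
        · show ((h:ℝ) * (m:ℝ)) * ((u 0 + p - γ * a 1 : ℤ) : ℝ)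
            = (c₁:ℝ) * ((u 0 : ℤ) : ℝ) + (δ:ℝ) * ((v 0 : ℤ) : ℝ) + (m:ℝ) * ((x 0 : ℤ) : ℝ)
          exact_mod_cast congrArg (fun t : ℤ => (t : ℝ)) hid0
        · show ((h:ℝ) * (m:ℝ)) * ((u 1 + q + γ * a 0 : ℤ) : ℝ)
            = (c₁:ℝ) * ((u 1 : ℤ) : ℝ) + (δ:ℝ) * ((v 1 : ℤ) : ℝ) + (m:ℝ) * ((x 1 : ℤ) : ℝ)
          exact_mod_cast congrArg (fun t : ℤ => (t : ℝ)) hid1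
      simp only [Pi.add_apply, Pi.smul_apply, smul_eq_mul]
      field_simp
      linear_combination hidR
    rw [hyeq]
    exact hfin

/-- Triangle construction: a primitive edge through lattice points `u ≠ v` at level `a₀`
and a lattice point `x` at level `≥ a₀ + 2` yield a lattice point at level `a₀ + 1`
inside the triangle. -/
lemma triangle_point {a₀ : ℤ} {a u v x : Fin 2 → ℤ} (hgcd : Int.gcd (a 0) (a 1) = 1)
    (huv : u ≠ v) (hu : zdot a u = a₀) (hv : zdot a v = a₀)
    (hx : a₀ + 2 ≤ zdot a x) :
    ∃ y : Fin 2 → ℤ, zdot a y = a₀ + 1 ∧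
      zR y ∈ convexHull ℝ {zR u, zR v, zR x} := by
  obtain ⟨p, q, hbez⟩ : ∃ p q : ℤ, a 0 * p + a 1 * q = 1 := by
    refine ⟨Int.gcdA (a 0) (a 1), Int.gcdB (a 0) (a 1), ?_⟩
    have := Int.gcd_eq_gcd_ab (a 0) (a 1)
    rw [hgcd] at this
    exact_mod_cast this.symm
  have hΔ : a 0 * (v 0 - u 0) + a 1 * (v 1 - u 1) = 0 := by
    simp only [zdot] at hu hv; linarith
  obtain ⟨m, hm⟩ : ∃ c : ℤ, c = p * (v 1 - u 1) - q * (v 0 - u 0) := ⟨_, rfl⟩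
  have hΔ1 : v 1 - u 1 = m * a 0 := by
    rw [hm]; linear_combination (-(v 1 - u 1)) * hbez + q * hΔ
  have hΔ0 : v 0 - u 0 = -(m * a 1) := by
    rw [hm]; linear_combination (-(v 0 - u 0)) * hbez + p * hΔ
  have hmne : m ≠ 0 := by
    intro h0
    apply huv
    funext i
    rw [h0] at hΔ0 hΔ1
    fin_cases i
    · show u 0 = v 0; omega
    · show u 1 = v 1; omega
  rcases lt_or_gt_of_ne hmne with hneg | hpos
  · -- swap u and v
    have h0 : u 0 - v 0 = -((-m) * a 1) := by
      rw [show -((-m) * a 1) = m * a 1 by ring]; omega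
    have h1 : u 1 - v 1 = (-m) * a 0 := by
      rw [show (-m) * a 0 = -(m * a 0) by ring]; omega
    obtain ⟨y, hy1, hy2⟩ := triangle_aux hbez (by omega : 1 ≤ -m) h0 h1 hv hx
    refine ⟨y, hy1, ?_⟩
    have hset : ({zR v, zR u, zR x} : Set (Fin 2 → ℝ)) = {zR u, zR v, zR x} := by
      rw [Set.insert_comm]
    rwa [hset] at hy2
  · exact triangle_aux hbez (by omega : 1 ≤ m) hΔ0 hΔ1 hu hx


/-- integer coordinates of a cube point -/
def cubeZ {n : ℕ} (x : Fin 2 → Fin n) : Fin 2 → ℤ := fun i => ((x i : ℕ) : ℤ)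

lemma zR_toZ {n : ℕ} (x : Fin 2 → Fin n) : zR (cubeZ x) = toR x := by
  funext i; simp [zR, cubeZ, toR]

lemma toR_inj {n : ℕ} {x y : Fin 2 → Fin n} (h : toR x = toR y) : x = y := by
  funext i
  have := congrFun h i
  simp only [toR] at this
  have : (x i : ℕ) = (y i : ℕ) := by exact_mod_cast this
  exact Fin.ext this

lemma S_eq (n : ℕ) (f : (Fin 2 → Fin n) → Bool) :
    (((Finset.univ.filter (fun t => f t = true)).image toR : Finset (Fin 2 → ℝ)) :
      Set (Fin 2 → ℝ)) = toR '' {z | f z = true} := by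
  ext p
  simp [Set.mem_image]

lemma G_eq (n : ℕ) (f : (Fin 2 → Fin n) → Bool) :
    zR '' (((Finset.univ.filter (fun t => f t = true)).image cubeZ :
      Finset (Fin 2 → ℤ)) : Set (Fin 2 → ℤ)) = toR '' {z | f z = true} := by
  ext p
  constructor
  · rintro ⟨v, hv, rfl⟩
    simp only [Finset.coe_image, Set.mem_image, Finset.mem_coe, Finset.mem_filter] at hv
    obtain ⟨t, ⟨_, ht⟩, rfl⟩ := hv
    exact ⟨t, ht, zR_toZ t⟩
  · rintro ⟨t, ht, rfl⟩
    refine ⟨cubeZ t, ?_, zR_toZ t⟩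
    simp only [Finset.coe_image, Set.mem_image, Finset.mem_coe, Finset.mem_filter]
    exact ⟨t, ⟨Finset.mem_univ t, ht⟩, rfl⟩

/-- L1: a lattice point outside the hull violates some edge inequality by an integer amount. -/
lemma exists_edge_violation {n : ℕ} (f : (Fin 2 → Fin n) → Bool)
    (harea : (interior (hullOne 2 n f)).Nonempty)
    {z : Fin 2 → Fin n} (hz : toR z ∉ hullOne 2 n f) :
    ∃ a₁ a₂ a₀ : ℤ, IsEdgeIneq (hullOne 2 n f) a₁ a₂ a₀ ∧
      (a₀ : ℝ) + 1 ≤ (a₁:ℝ) * (toR z 0) + (a₂:ℝ) * (toR z 1) := by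
  classical
  set G : Finset (Fin 2 → ℤ) := (Finset.univ.filter (fun t => f t = true)).image cubeZ with hG
  have hset : zR '' (G : Set (Fin 2 → ℤ)) = toR '' {z | f z = true} := G_eq n f
  have hull_eq : convexHull ℝ (zR '' (G : Set (Fin 2 → ℤ))) = hullOne 2 n f := by
    rw [hset]; rfl
  have hGarea : (interior (convexHull ℝ (zR '' (G : Set (Fin 2 → ℤ))))).Nonempty := by
    rw [hull_eq]; exact harea
  have hGz : zR (cubeZ z) ∉ convexHull ℝ (zR '' (G : Set (Fin 2 → ℤ))) := by
    rw [hull_eq, zR_toZ]; exact hz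
  obtain ⟨a, a₀, hgcd, hle, ⟨u, huG, v, hvG, huv, hu0, hv0⟩, hviol⟩ := core hGarea hGz
  refine ⟨a 0, a 1, a₀, ⟨hgcd, ?_, zR u, ?_, zR v, ?_, ?_, ?_, ?_⟩, ?_⟩
  · -- half space over the hull
    intro y hy
    have hy' : y ∈ convexHull ℝ (zR '' (G : Set (Fin 2 → ℤ))) := by rw [hull_eq]; exact hy
    refine hull_le (fun s hs => ?_) y hy'
    obtain ⟨g, hg, rfl⟩ := hs
    have : zdot a g ≤ a₀ := hle g hg
    have : ((zdot a g : ℤ) : ℝ) ≤ ((a₀ : ℤ) : ℝ) := by exact_mod_cast this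
    simp only [zdot] at this
    push_cast at this
    simpa [zR] using this
  · rw [← hull_eq]
    exact subset_convexHull ℝ _ ⟨u, huG, rfl⟩
  · rw [← hull_eq]
    exact subset_convexHull ℝ _ ⟨v, hvG, rfl⟩
  · intro h
    exact huv (zR_inj h)
  · have : ((zdot a u : ℤ) : ℝ) = ((a₀ : ℤ) : ℝ) := by exact_mod_cast hu0
    simp only [zdot] at this; push_cast at this; simpa [zR] using this
  · have : ((zdot a v : ℤ) : ℝ) = ((a₀ : ℤ) : ℝ) := by exact_mod_cast hv0
    simp only [zdot] at this; push_cast at this; simpa [zR] using this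
  · have : ((a₀ + 1 : ℤ) : ℝ) ≤ ((zdot a (cubeZ z) : ℤ) : ℝ) := by exact_mod_cast hviol
    simp only [zdot] at this; push_cast at this
    simp only [toR, cubeZ] at *
    push_cast at this ⊢
    linarith

/-- the cube box and its convexity -/
lemma box_convex (c : ℝ) : Convex ℝ {p : Fin 2 → ℝ | ∀ i, 0 ≤ p i ∧ p i ≤ c} := by
  intro p hp q hq s t hs ht hst
  intro i
  have hpi := hp i
  have hqi := hq i
  simp only [Pi.add_apply, Pi.smul_apply, smul_eq_mul]
  constructor
  · nlinarith [hpi.1, hqi.1]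
  · nlinarith [hpi.2, hqi.2]

lemma toR_mem_box {n : ℕ} (x : Fin 2 → Fin n) :
    toR x ∈ {p : Fin 2 → ℝ | ∀ i, 0 ≤ p i ∧ p i ≤ (n:ℝ) - 1} := by
  intro i
  simp only [toR]
  constructor
  · positivity
  · have : (x i : ℕ) + 1 ≤ n := (x i).2
    have : ((x i : ℕ) : ℝ) + 1 ≤ (n : ℝ) := by exact_mod_cast this
    linarith

/-- L2: a far violation of an edge inequality yields a second outside lattice point
in the extended hull. -/
lemma exists_separating_point {n : ℕ} (f : (Fin 2 → Fin n) → Bool)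
    (hf : LatticeConvex f)
    {A₁ A₂ A₀ : ℤ} (hedge : IsEdgeIneq (hullOne 2 n f) A₁ A₂ A₀)
    {x : Fin 2 → Fin n}
    (hx : (A₀:ℝ) + 2 ≤ (A₁:ℝ) * toR x 0 + (A₂:ℝ) * toR x 1) :
    ∃ y : Fin 2 → Fin n, y ≠ x ∧ f y = false ∧
      toR y ∈ convexHull ℝ (toR '' {z | f z = true} ∪ {toR x}) := by
  classical
  obtain ⟨hgcd, hle, u, huP, v, hvP, huv, hulin, hvlin⟩ := hedge
  set F : Finset (Fin 2 → ℝ) := (Finset.univ.filter (fun t => f t = true)).image toR with hF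
  have hFS : (F : Set (Fin 2 → ℝ)) = toR '' {z | f z = true} := S_eq n f
  have hhull : hullOne 2 n f = convexHull ℝ (F : Set (Fin 2 → ℝ)) := by rw [hFS]; rfl
  have hleF : ∀ s ∈ F, (A₁:ℝ) * s 0 + (A₂:ℝ) * s 1 ≤ (A₀:ℝ) := by
    intro s hs
    exact hle s (by rw [hhull]; exact subset_convexHull ℝ _ (Finset.mem_coe.2 hs))
  have huF : u ∈ convexHull ℝ (F : Set (Fin 2 → ℝ)) := by rw [← hhull]; exact huP
  have hvF : v ∈ convexHull ℝ (F : Set (Fin 2 → ℝ)) := by rw [← hhull]; exact hvP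
  have hufa := face_mem hleF huF hulin
  have hvfa := face_mem hleF hvF hvlin
  set F₀ := F.filter (fun s => (A₁:ℝ) * s 0 + (A₂:ℝ) * s 1 = (A₀:ℝ)) with hF₀
  have hF₀ne : F₀.Nonempty := by
    by_contra he
    rw [Finset.not_nonempty_iff_eq_empty] at he
    rw [he] at hufa
    simp at hufa
  have htwo : ∃ s ∈ F₀, ∃ t ∈ F₀, s ≠ t := by
    by_contra hns
    push_neg at hns
    obtain ⟨s₀, hs₀⟩ := hF₀ne
    have hsub : (F₀ : Set (Fin 2 → ℝ)) ⊆ {s₀} := by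
      intro t ht
      exact hns t (Finset.mem_coe.1 ht) s₀ hs₀
    have hhsub : convexHull ℝ (F₀ : Set (Fin 2 → ℝ)) ⊆ {s₀} := by
      have := convexHull_mono hsub (𝕜 := ℝ)
      rwa [convexHull_singleton] at this
    have h1 : u = s₀ := hhsub hufa
    have h2 : v = s₀ := hhsub hvfa
    exact huv (h1.trans h2.symm)
  obtain ⟨s, hs, t, ht, hst⟩ := htwo
  have hsF : s ∈ F := Finset.filter_subset _ _ hs
  have htF : t ∈ F := Finset.filter_subset _ _ ht
  obtain ⟨xs, hxs, hxsR⟩ : ∃ xs, f xs = true ∧ toR xs = s := by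
    simp only [hF, Finset.mem_image, Finset.mem_filter] at hsF
    obtain ⟨xs, ⟨_, h1⟩, h2⟩ := hsF
    exact ⟨xs, h1, h2⟩
  obtain ⟨xt, hxt, hxtR⟩ : ∃ xt, f xt = true ∧ toR xt = t := by
    simp only [hF, Finset.mem_image, Finset.mem_filter] at htF
    obtain ⟨xt, ⟨_, h1⟩, h2⟩ := htF
    exact ⟨xt, h1, h2⟩
  set A : Fin 2 → ℤ := ![A₁, A₂] with hA
  have hA0 : A 0 = A₁ := rfl
  have hA1 : A 1 = A₂ := rfl
  have hslin : (A₁:ℝ) * s 0 + (A₂:ℝ) * s 1 = (A₀:ℝ) := (Finset.mem_filter.1 hs).2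
  have htlin : (A₁:ℝ) * t 0 + (A₂:ℝ) * t 1 = (A₀:ℝ) := (Finset.mem_filter.1 ht).2
  have hus : zdot A (cubeZ xs) = A₀ := by
    rw [← hxsR] at hslin
    simp only [toR] at hslin
    simp only [zdot, hA0, hA1, cubeZ]
    exact_mod_cast hslin
  have hut : zdot A (cubeZ xt) = A₀ := by
    rw [← hxtR] at htlin
    simp only [toR] at htlin
    simp only [zdot, hA0, hA1, cubeZ]
    exact_mod_cast htlin
  have hxz : A₀ + 2 ≤ zdot A (cubeZ x) := by
    simp only [toR] at hx
    simp only [zdot, hA0, hA1, cubeZ]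
    exact_mod_cast hx
  have hstz : cubeZ xs ≠ cubeZ xt := by
    intro h
    apply hst
    rw [← hxsR, ← hxtR, ← zR_toZ, ← zR_toZ, h]
  obtain ⟨y, hylev, hymem⟩ := triangle_point (a := A) (by rw [hA0, hA1]; exact hgcd)
    hstz hus hut hxz
  rw [zR_toZ, zR_toZ, zR_toZ, hxsR, hxtR] at hymem
  -- membership in the extended hull
  have hsub3 : ({s, t, toR x} : Set (Fin 2 → ℝ)) ⊆ toR '' {z | f z = true} ∪ {toR x} := by
    intro p hp
    rcases hp with rfl | rfl | rfl
    · exact Or.inl (by rw [← hFS]; exact Finset.mem_coe.2 hsF)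
    · exact Or.inl (by rw [← hFS]; exact Finset.mem_coe.2 htF)
    · exact Or.inr rfl
  have hymem' : zR y ∈ convexHull ℝ (toR '' {z | f z = true} ∪ {toR x}) :=
    convexHull_mono hsub3 hymem
  -- box bounds
  have hboxsub : convexHull ℝ (toR '' {z | f z = true} ∪ {toR x})
      ⊆ {p : Fin 2 → ℝ | ∀ i, 0 ≤ p i ∧ p i ≤ (n:ℝ) - 1} := by
    apply convexHull_min _ (box_convex _)
    rintro p (⟨w, _, rfl⟩ | rfl)
    · exact toR_mem_box w
    · exact toR_mem_box x
  have hybox := hboxsub hymem'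
  have hylo : ∀ i, 0 ≤ y i := by
    intro i
    have := (hybox i).1
    simp only [zR] at this
    exact_mod_cast this
  have hyhi : ∀ i, y i + 1 ≤ (n : ℤ) := by
    intro i
    have := (hybox i).2
    simp only [zR] at this
    have : ((y i : ℤ) : ℝ) + 1 ≤ (n : ℝ) := by linarith
    exact_mod_cast this
  set yy : Fin 2 → Fin n := fun i => ⟨(y i).toNat, by have := hylo i; have := hyhi i; omega⟩
    with hyy
  have hyyR : toR yy = zR y := by
    funext i
    simp only [toR, zR, hyy]
    have := Int.toNat_of_nonneg (hylo i)
    exact_mod_cast congrArg (fun m : ℤ => (m : ℝ)) this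
  have hyyZ : cubeZ yy = y := by
    funext i
    simp only [cubeZ, hyy]
    exact Int.toNat_of_nonneg (hylo i)
  have hynot : toR yy ∉ hullOne 2 n f := by
    intro hmem
    have hd := hle _ hmem
    rw [hyyR] at hd
    have : ((zdot A y : ℤ) : ℝ) ≤ (A₀ : ℝ) := by
      simp only [zdot, hA0, hA1]
      push_cast
      simpa [zR] using hd
    rw [hylev] at this
    have : (A₀ : ℝ) + 1 ≤ (A₀ : ℝ) := by push_cast at this; linarith
    linarith
  refine ⟨yy, ?_, ?_, by rw [hyyR]; exact hymem'⟩
  · intro he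
    rw [← hyyZ, he] at hylev
    omega
  · have : f yy ≠ true := fun htr => hynot ((hf yy).1 htr)
    simpa using this

/-- `D(f) = ΔP(f) ∩ M₀(f)` for planar `f` with `P(f)` of positive area. -/
theorem stmt12 (n : ℕ) (hn : 2 ≤ n) (f : (Fin 2 → Fin n) → Bool)
    (hf : f ∈ TStar 2 n) (harea : (interior (hullOne 2 n f)).Nonempty) :
    DSet 2 n f = {x | f x = false ∧ toR x ∈ Pprime n f \ hullOne 2 n f} := by
  have hf' : LatticeConvex f := hf
  have hfalse_iff : ∀ x : Fin 2 → Fin n, f x = false ↔ toR x ∉ hullOne 2 n f := by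
    intro x
    constructor
    · intro h hm
      have := (hf' x).2 hm
      rw [h] at this
      cases this
    · intro h
      cases hx : f x with
      | false => rfl
      | true => exact absurd ((hf' x).1 hx) h
  ext x
  simp only [DSet, Set.mem_setOf_eq, Set.mem_diff]
  constructor
  · rintro ⟨hx0, hD⟩
    refine ⟨hx0, ?_, (hfalse_iff x).1 hx0⟩
    intro a₁ a₂ a₀ hedge
    by_contra hgt
    push_neg at hgt
    have hint : (a₀:ℝ) + 2 ≤ (a₁:ℝ) * toR x 0 + (a₂:ℝ) * toR x 1 := by
      have h1 : ((a₀ + 1 : ℤ) : ℝ) < (a₁:ℝ) * toR x 0 + (a₂:ℝ) * toR x 1 := by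
        push_cast
        exact_mod_cast hgt
      have h2 : (a₀ + 1 : ℤ) < a₁ * ((x 0 : ℕ) : ℤ) + a₂ * ((x 1 : ℕ) : ℤ) := by
        have : ((a₁ * ((x 0 : ℕ) : ℤ) + a₂ * ((x 1 : ℕ) : ℤ) : ℤ) : ℝ)
            = (a₁:ℝ) * toR x 0 + (a₂:ℝ) * toR x 1 := by
          simp only [toR]; push_cast; ring
        exact_mod_cast this ▸ h1
      have h3 : (a₀ + 2 : ℤ) ≤ a₁ * ((x 0 : ℕ) : ℤ) + a₂ * ((x 1 : ℕ) : ℤ) := by omega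
      have : ((a₀ + 2 : ℤ) : ℝ) ≤ ((a₁ * ((x 0 : ℕ) : ℤ) + a₂ * ((x 1 : ℕ) : ℤ) : ℤ) : ℝ) := by
        exact_mod_cast h3
      simp only [toR]
      push_cast at this ⊢
      linarith
    obtain ⟨y, hyx, hyf, hym⟩ := exists_separating_point f hf' ⟨hedge.1, hedge.2.1, hedge.2.2⟩ hint
    exact hyx (hD y hym hyf)
  · rintro ⟨hx0, hxP, hxnot⟩
    refine ⟨hx0, ?_⟩
    intro y hy hyf
    have hynot : toR y ∉ hullOne 2 n f := (hfalse_iff y).1 hyf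
    obtain ⟨a₁, a₂, a₀, hedge, hviol⟩ := exists_edge_violation f harea hynot
    have hxle : (a₁:ℝ) * toR x 0 + (a₂:ℝ) * toR x 1 ≤ (a₀:ℝ) + 1 := hxP a₁ a₂ a₀ hedge
    have hSne : (toR '' {z | f z = true}).Nonempty := by
      rcases harea with ⟨p, hp⟩
      exact convexHull_nonempty_iff.1 ⟨p, interior_subset hp⟩
    rw [Set.union_singleton, convexHull_insert hSne, mem_convexJoin] at hy
    obtain ⟨pX, hpX, qh, hqh, hseg⟩ := hy
    rw [Set.mem_singleton_iff] at hpX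
    subst hpX
    obtain ⟨t1, t2, ht1, ht2, hsum, heq⟩ := hseg
    have hqle : (a₁:ℝ) * qh 0 + (a₂:ℝ) * qh 1 ≤ (a₀:ℝ) := hedge.2.1 qh hqh
    have hyd : (a₁:ℝ) * toR y 0 + (a₂:ℝ) * toR y 1
        = t1 * ((a₁:ℝ) * toR x 0 + (a₂:ℝ) * toR x 1) + t2 * ((a₁:ℝ) * qh 0 + (a₂:ℝ) * qh 1) := by
      have h0 := congrFun heq 0
      have h1 := congrFun heq 1
      simp only [Pi.add_apply, Pi.smul_apply, smul_eq_mul] at h0 h1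
      rw [← h0, ← h1]
      ring
    have ht1ge : 1 ≤ t1 := by
      have e : t1 * ((a₀:ℝ) + 1) + t2 * (a₀:ℝ) = (a₀:ℝ) + t1 := by
        linear_combination (a₀:ℝ) * hsum
      have m1 := mul_le_mul_of_nonneg_left hxle ht1
      have m2 := mul_le_mul_of_nonneg_left hqle ht2
      linarith
    have ht2z : t2 = 0 := by linarith
    have ht1o : t1 = 1 := by linarith
    rw [ht2z, ht1o, one_smul, zero_smul, add_zero] at heq
    exact toR_inj heq.symm
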